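/- arXiv:2312.16087 — 6 statements merged into one kernel-verified Lean document; each statement's English description precedes it below -/
import Mathlib

section
/- Let G be a (c,d,α,δ)-bipartite expander with left vertex set L of size n. Then for every set S ⊆ L with |S| ≤ αn and every integer t ∈ [d], the number of right vertices having between 1 and t neighbors in S is at least ((δ(t+1)-1)/t)·c|S|. -/
open Finset
open scoped Classical

/-- Proposition 2.1 (folklore expander estimate): in a `(c,d,α,δ)`-bipartite expander,
for every `S ⊆ L` with `|S| ≤ αn` and every `1 ≤ t ≤ d`,
`|N_{≤t}(S)| ≥ ((δ(t+1)-1)/t)·c·|S|`. -/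
theorem stmt_0 {L R : Type*} [Fintype L] [Fintype R] [DecidableEq L] [DecidableEq R]
    (Adj : L → R → Prop)
    (c d n : ℕ) (α δ : ℝ)
    (hn : Fintype.card L = n)
    (hleft : ∀ v : L, (univ.filter (fun u : R => Adj v u)).card = c)
    (hright : ∀ u : R, (univ.filter (fun v : L => Adj v u)).card = d)
    (hexp : ∀ S : Finset L, (S.card : ℝ) ≤ α * n →
      δ * c * S.card ≤
        ((univ.filter (fun u : R => 0 < (S.filter (fun v => Adj v u)).card)).card : ℝ))
    (S : Finset L) (hS : (S.card : ℝ) ≤ α * n)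
    (t : ℕ) (ht1 : 1 ≤ t) (htd : t ≤ d) :
    (δ * (t + 1) - 1) / t * c * S.card ≤
      ((univ.filter (fun u : R =>
        1 ≤ (S.filter (fun v => Adj v u)).card ∧
          (S.filter (fun v => Adj v u)).card ≤ t)).card : ℝ) := by
  set deg : R → ℕ := fun u => (S.filter (fun v => Adj v u)).card with hdeg
  set A : Finset R := univ.filter (fun u => 1 ≤ deg u ∧ deg u ≤ t) with hA
  set B : Finset R := univ.filter (fun u => 0 < deg u) with hB
  -- double counting: total degree = c * |S|
  have hsum : ∑ u : R, deg u = c * S.card := by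
    have h1 : ∑ u : R, deg u = ∑ v ∈ S, (univ.filter (fun u : R => Adj v u)).card := by
      simp only [hdeg, Finset.card_filter]
      exact Finset.sum_comm (s := (univ : Finset R)) (t := S) (f := fun u v => if Adj v u then (1:ℕ) else 0)
    rw [h1]
    simp [hleft, mul_comm]
  have hAB : A ⊆ B := by
    intro u hu
    simp only [hA, hB, Finset.mem_filter] at *
    exact ⟨hu.1, lt_of_lt_of_le Nat.zero_lt_one hu.2.1⟩
  have hsumB : ∑ u ∈ B, deg u = c * S.card := by
    rw [← hsum]
    refine Finset.sum_subset (f := deg) (Finset.subset_univ B) ?_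
    intro u _ hu
    simp only [hB, Finset.mem_filter, Finset.mem_univ, true_and, not_lt,
      Nat.le_zero] at hu
    exact hu
  -- key inequality in ℕ: (t+1)*|B| ≤ c*|S| + t*|A|
  have hkey : (t + 1) * B.card ≤ c * S.card + t * A.card := by
    rw [← hsumB]
    have hsplit : ∑ u ∈ B, deg u + t * A.card
        = ∑ u ∈ A, (deg u + t) + ∑ u ∈ B \ A, deg u := by
      rw [← Finset.sum_sdiff hAB, Finset.sum_add_distrib, Finset.sum_const,
        smul_eq_mul]
      ring
    have h1 : ∀ u ∈ A, t + 1 ≤ deg u + t := by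
      intro u hu
      simp only [hA, Finset.mem_filter] at hu
      omega
    have h2 : ∀ u ∈ B \ A, t + 1 ≤ deg u := by
      intro u hu
      simp only [Finset.mem_sdiff, hA, hB, Finset.mem_filter, Finset.mem_univ,
        true_and] at hu
      omega
    have hA' : A.card * (t + 1) ≤ ∑ u ∈ A, (deg u + t) := by
      simpa using Finset.card_nsmul_le_sum A _ (t + 1) h1
    have hB' : (B \ A).card * (t + 1) ≤ ∑ u ∈ B \ A, deg u := by
      simpa using Finset.card_nsmul_le_sum (B \ A) _ (t + 1) h2
    calc (t + 1) * B.card = A.card * (t + 1) + (B \ A).card * (t + 1) := by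
          rw [← Finset.card_sdiff_add_card_eq_card hAB]; ring
      _ ≤ ∑ u ∈ A, (deg u + t) + ∑ u ∈ B \ A, deg u :=
          Nat.add_le_add hA' hB'
      _ = ∑ u ∈ B, deg u + t * A.card := hsplit.symm
  have hexpS : δ * c * S.card ≤ (B.card : ℝ) := hexp S hS
  have ht0 : (0:ℝ) < t := by exact_mod_cast ht1
  have hkeyR : ((t:ℝ) + 1) * B.card ≤ c * S.card + t * A.card := by
    exact_mod_cast hkey
  have hstep : δ * ((t:ℝ) + 1) * c * S.card ≤ ((t:ℝ) + 1) * B.card := by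
    calc δ * ((t:ℝ) + 1) * c * S.card = ((t:ℝ) + 1) * (δ * c * S.card) := by ring
      _ ≤ ((t:ℝ) + 1) * B.card := by
          apply mul_le_mul_of_nonneg_left hexpS
          positivity
  have hfinal : (δ * ((t:ℝ) + 1) - 1) * c * S.card ≤ (A.card : ℝ) * t := by
    nlinarith [hstep, hkeyR]
  rw [div_mul_eq_mul_div, div_mul_eq_mul_div, div_le_iff₀ ht0]
  linarith [hfinal]
end

section
/- Let G be a (c,d,α,δ)-bipartite expander and F ⊆ L with |F| ≤ αn. Let t = ⌊1/δ⌋ and suppose d₀ > 3/δ − 1 + 2ε₀ for some ε₀ > 0 with ⌊1/δ + ε₀⌋ = ⌊1/δ⌋. Let A = N_{≤t}(F) and B ⊆ N_{≥d₀−t}(F). Then |A| − |B| ≥ ε₀δ²c|F|. -/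
open Finset
open scoped Classical

set_option maxHeartbeats 1600000 in
/-- In a `(c,d,α,δ)`-bipartite expander, for `F` with `|F| ≤ αn`, `t = ⌊1/δ⌋`,
`d₀ > 3/δ - 1 + 2ε₀` with `⌊1/δ + ε₀⌋ = ⌊1/δ⌋`, `A = N_{≤t}(F)` and
`B ⊆ N_{≥ d₀-t}(F)`, one has `|A| - |B| ≥ ε₀δ²c|F|`. -/
theorem stmt_2 {L R : Type*} [Fintype L] [Fintype R] [DecidableEq L] [DecidableEq R]
    (Adj : L → R → Prop)
    (c d n : ℕ) (α δ : ℝ) (hδ : 0 < δ) (hδ1 : δ ≤ 1)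
    (hn : Fintype.card L = n)
    (hleft : ∀ v : L, (univ.filter (fun u : R => Adj v u)).card = c)
    (hright : ∀ u : R, (univ.filter (fun v : L => Adj v u)).card = d)
    (hexp : ∀ S : Finset L, (S.card : ℝ) ≤ α * n →
      δ * c * S.card ≤
        ((univ.filter (fun u : R => 0 < (S.filter (fun v => Adj v u)).card)).card : ℝ))
    (F : Finset L) (hF : (F.card : ℝ) ≤ α * n)
    (t : ℕ) (ht : t = ⌊1 / δ⌋₊)
    (ε₀ : ℝ) (hε₀ : 0 < ε₀) (hfloor : ⌊1 / δ + ε₀⌋₊ = ⌊1 / δ⌋₊)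
    (d₀ : ℕ) (hd₀ : (d₀ : ℝ) > 3 / δ - 1 + 2 * ε₀) (hd₀d : d₀ ≤ d)
    (A : Finset R)
    (hA : A = univ.filter (fun u : R =>
      1 ≤ (F.filter (fun v => Adj v u)).card ∧ (F.filter (fun v => Adj v u)).card ≤ t))
    (B : Finset R)
    (hB : B ⊆ univ.filter (fun u : R =>
      (d₀ : ℝ) - t ≤ ((F.filter (fun v => Adj v u)).card : ℝ))) :
    ε₀ * δ ^ 2 * c * F.card ≤ (A.card : ℝ) - B.card := by
  -- the degree (into F) function
  set deg : R → ℕ := fun u => (F.filter (fun v => Adj v u)).card with hdeg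
  -- basic facts about t, δ, ε₀
  have htle : (t : ℝ) ≤ 1 / δ := by
    rw [ht]; exact Nat.floor_le (by positivity)
  have htδ : (t : ℝ) * δ ≤ 1 := by
    have := mul_le_mul_of_nonneg_right htle hδ.le
    rwa [one_div, inv_mul_cancel₀ (ne_of_gt hδ)] at this
  have ht1 : 1 ≤ t := by
    rw [ht]
    exact Nat.le_floor (by rw [Nat.cast_one]; exact one_le_one_div hδ hδ1)
  have ht1' : (1 : ℝ) ≤ (t : ℝ) := by exact_mod_cast ht1
  have hlt : 1 / δ + ε₀ < (t : ℝ) + 1 := by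
    have := Nat.lt_floor_add_one (1 / δ + ε₀)
    rwa [hfloor, ← ht] at this
  have h3 : 1 + ε₀ * δ < ((t : ℝ) + 1) * δ := by
    have h := mul_lt_mul_of_pos_right hlt hδ
    rw [add_mul, div_mul_cancel₀ _ (ne_of_gt hδ)] at h
    linarith
  have hd3t : 3 * t ≤ d₀ := by
    have h3t : 3 * (t : ℝ) ≤ 3 / δ := by
      rw [div_eq_mul_one_div]; nlinarith
    have : (3 * t : ℝ) - 1 < (d₀ : ℝ) := by push_cast; linarith
    have : (3 * t : ℕ) < d₀ + 1 := by exact_mod_cast (by push_cast; linarith : (3 * t : ℝ) < (d₀ : ℝ) + 1)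
    omega
  have htd₀ : t ≤ d₀ := by omega
  -- total degree sum
  have hsum : ∑ u : R, deg u = c * F.card := by
    have h1 : ∑ u : R, deg u
        = ∑ v ∈ F, (univ.filter (fun u : R => Adj v u)).card := by
      simp only [hdeg, Finset.card_filter]
      exact Finset.sum_comm
    rw [h1]
    simp [hleft, mul_comm]
  -- the neighborhood
  set N : Finset R := univ.filter (fun u : R => 0 < deg u) with hN
  have hexpN : δ * c * F.card ≤ (N.card : ℝ) := hexp F hF
  -- B degrees
  have hBdeg : ∀ u ∈ B, d₀ - t ≤ deg u := by
    intro u hu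
    have := (Finset.mem_filter.1 (hB hu)).2
    have h' : (d₀ : ℝ) - (t : ℝ) ≤ (deg u : ℝ) := this
    have : ((d₀ - t : ℕ) : ℝ) ≤ (deg u : ℝ) := by
      rwa [Nat.cast_sub htd₀]
    exact_mod_cast this
  have hAdeg : ∀ u ∈ A, 1 ≤ deg u ∧ deg u ≤ t := by
    intro u hu
    rw [hA] at hu
    exact (Finset.mem_filter.1 hu).2
  -- subsets and disjointness
  have hAN : A ⊆ N := by
    intro u hu
    simp only [hN, Finset.mem_filter, Finset.mem_univ, true_and]
    exact (hAdeg u hu).1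
  have hBN : B ⊆ N := by
    intro u hu
    simp only [hN, Finset.mem_filter, Finset.mem_univ, true_and]
    have := hBdeg u hu
    omega
  have hdisj : Disjoint A B := by
    rw [Finset.disjoint_left]
    intro u huA huB
    have h1 := hAdeg u huA
    have h2 := hBdeg u huB
    omega
  have hABN : A ∪ B ⊆ N := Finset.union_subset hAN hBN
  have hcards : A.card + B.card ≤ N.card := by
    rw [← Finset.card_union_of_disjoint hdisj]
    exact Finset.card_le_card hABN
  -- counting inequality in ℕ
  have hsplit : ∑ u ∈ N, deg u
      = ∑ u ∈ A, deg u + ∑ u ∈ B, deg u + ∑ u ∈ N \ (A ∪ B), deg u := by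
    rw [← Finset.sum_union hdisj, ← Finset.sum_union (Finset.disjoint_sdiff),
      Finset.union_sdiff_of_subset hABN]
  have hNsum : ∑ u ∈ N, deg u ≤ c * F.card := by
    rw [← hsum]
    exact Finset.sum_le_sum_of_subset (Finset.subset_univ N)
  have hAsum : A.card * 1 ≤ ∑ u ∈ A, deg u :=
    Finset.card_nsmul_le_sum A deg 1 (fun u hu => (hAdeg u hu).1)
  have hBsum : B.card * (d₀ - t) ≤ ∑ u ∈ B, deg u :=
    Finset.card_nsmul_le_sum B deg (d₀ - t) hBdeg
  have hCsum : (N \ (A ∪ B)).card * (t + 1) ≤ ∑ u ∈ N \ (A ∪ B), deg u := by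
    have hh : ∀ u ∈ N \ (A ∪ B), t + 1 ≤ deg u := by
      intro u hu
      have huN := (Finset.mem_sdiff.1 hu).1
      have huAB := (Finset.mem_sdiff.1 hu).2
      have hupos : 0 < deg u := (Finset.mem_filter.1 huN).2
      have huA : u ∉ A := fun h => huAB (Finset.mem_union_left _ h)
      have : ¬(1 ≤ deg u ∧ deg u ≤ t) := by
        intro h
        exact huA (by rw [hA]; exact Finset.mem_filter.2 ⟨Finset.mem_univ u, h⟩)
      omega
    simpa [smul_eq_mul] using Finset.card_nsmul_le_sum (N \ (A ∪ B)) deg (t + 1) hh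
  have hCcard : (N \ (A ∪ B)).card = N.card - (A.card + B.card) := by
    rw [Finset.card_sdiff_of_subset hABN, Finset.card_union_of_disjoint hdisj]
  have hcount : A.card * 1 + B.card * (d₀ - t) + (N.card - (A.card + B.card)) * (t + 1)
      ≤ c * F.card := by
    rw [← hCcard]
    calc A.card * 1 + B.card * (d₀ - t) + (N \ (A ∪ B)).card * (t + 1)
        ≤ ∑ u ∈ A, deg u + ∑ u ∈ B, deg u + ∑ u ∈ N \ (A ∪ B), deg u := by
          exact Nat.add_le_add (Nat.add_le_add hAsum hBsum) hCsum
      _ = ∑ u ∈ N, deg u := hsplit.symm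
      _ ≤ c * F.card := hNsum
  -- cast to ℝ
  have hcountR : (A.card : ℝ) * 1 + (B.card : ℝ) * ((d₀ : ℝ) - t)
      + ((N.card : ℝ) - ((A.card : ℝ) + (B.card : ℝ))) * ((t : ℝ) + 1)
      ≤ (c : ℝ) * (F.card : ℝ) := by
    calc (A.card : ℝ) * 1 + (B.card : ℝ) * ((d₀ : ℝ) - t)
        + ((N.card : ℝ) - ((A.card : ℝ) + (B.card : ℝ))) * ((t : ℝ) + 1)
        = ((A.card * 1 + B.card * (d₀ - t) + (N.card - (A.card + B.card)) * (t + 1) : ℕ) : ℝ) := by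
          push_cast [Nat.cast_sub htd₀, Nat.cast_sub hcards]; ring
      _ ≤ ((c * F.card : ℕ) : ℝ) := by exact_mod_cast hcount
      _ = (c : ℝ) * (F.card : ℝ) := by push_cast; ring
  have hmab : (A.card : ℝ) + (B.card : ℝ) ≤ (N.card : ℝ) := by exact_mod_cast hcards
  have hd0cast : ((3 * t : ℕ) : ℝ) ≤ (d₀ : ℝ) := by exact_mod_cast hd3t
  have hd0R' : 3 * (t : ℝ) ≤ (d₀ : ℝ) := by push_cast at hd0cast; linarith
  clear hsum hsplit hNsum hAsum hBsum hCsum hCcard hcount hA hB hexp hleft hright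
  clear hBdeg hAdeg hAN hBN hABN hdisj hcards hd0cast hF hn hfloor hlt htle
  set a : ℝ := (A.card : ℝ) with haa
  set b : ℝ := (B.card : ℝ) with hbb
  set m : ℝ := (N.card : ℝ) with hmm
  set K : ℝ := (c : ℝ) * (F.card : ℝ) with hKK
  clear_value a b m K
  clear hN hmm hdeg
  clear N deg
  have ha0 : 0 ≤ a := by rw [haa]; positivity
  have hb0 : 0 ≤ b := by rw [hbb]; positivity
  have hK0 : 0 ≤ K := by rw [hKK]; positivity
  have hT0 : (0 : ℝ) < (t : ℝ) := by linarith
  -- main estimate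
  have hmain : (t : ℝ) * a - (t : ℝ) * b
      ≥ ((t : ℝ) + 1) * m - K + ((d₀ : ℝ) - 3 * t - 1) * b := by
    have h := hcountR
    ring_nf at h ⊢
    linarith
  have hmK : ((t : ℝ) + 1) * m - K ≥ (((t : ℝ) + 1) * δ - 1) * K := by
    nlinarith [hexpN, hT0]
  rcases Nat.lt_or_ge (3 * t) d₀ with hcase | hcase
  · -- d₀ ≥ 3t + 1
    have hd1 : (3 * (t : ℝ) + 1) ≤ (d₀ : ℝ) := by
      have : ((3 * t + 1 : ℕ) : ℝ) ≤ (d₀ : ℝ) := by exact_mod_cast hcase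
      push_cast at this; linarith
    have h1 : 0 ≤ ((d₀ : ℝ) - 3 * t - 1) * b :=
      mul_nonneg (by linarith) hb0
    have h2 : (t : ℝ) * a - (t : ℝ) * b ≥ (t : ℝ) * (ε₀ * δ ^ 2 * K) := by
      have hek : 0 ≤ (((t : ℝ) + 1) * δ - 1 - ε₀ * δ) * K :=
        mul_nonneg (by linarith) hK0
      have hlast : 0 ≤ (ε₀ * δ * K) * (1 - (t : ℝ) * δ) :=
        mul_nonneg (mul_nonneg (mul_nonneg hε₀.le hδ.le) hK0) (by linarith)
      ring_nf at hmain hmK hek hlast h1 ⊢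
      linarith [hmain, hmK, hek, hlast, h1]
    have h3' := (mul_le_mul_iff_right₀ hT0).1 (by linarith : (t : ℝ) * (ε₀ * δ ^ 2 * K) ≤ (t : ℝ) * (a - b))
    calc ε₀ * δ ^ 2 * c * F.card = ε₀ * δ ^ 2 * K := by rw [hKK]; ring
      _ ≤ a - b := h3'
  · -- d₀ = 3t
    have hd0eq : d₀ = 3 * t := le_antisymm hcase hd3t
    have hd0R : (d₀ : ℝ) = 3 * (t : ℝ) := by rw [hd0eq]; push_cast; ring
    have hbK : 2 * (t : ℝ) * b ≤ K := by
      rw [hd0R] at hcountR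
      have h6 : 0 ≤ (m - (a + b)) * ((t : ℝ) + 1) :=
        mul_nonneg (by linarith) (by linarith)
      nlinarith [hcountR, h6, ha0]
    have hconstr : 3 < δ * (3 * (t : ℝ) + 1 - 2 * ε₀) := by
      rw [hd0R] at hd₀
      have h := mul_lt_mul_of_pos_right hd₀ hδ
      have h3δ : 3 / δ * δ = 3 := div_mul_cancel₀ 3 (ne_of_gt hδ)
      nlinarith [h, h3δ]
    have he2 : ε₀ < 1 / 2 := by nlinarith [hconstr, htδ, hδ]
    have hpoly : 0 ≤ 2 * (t : ℝ) * ((t : ℝ) + 1) * δ - 2 * (t : ℝ) - 1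
        - 2 * (t : ℝ) ^ 2 * ε₀ * δ ^ 2 := by
      have hT1 : (1 : ℝ) ≤ (t : ℝ) := ht1'
      nlinarith [mul_nonneg (sub_nonneg.2 htδ) (by linarith : (0:ℝ) ≤ δ*(3*(t:ℝ)+1-2*ε₀) - 3),
        mul_nonneg (mul_nonneg (sub_nonneg.2 htδ) (by linarith : (0:ℝ) ≤ δ*(3*(t:ℝ)+1-2*ε₀) - 3)) (by linarith : (0:ℝ) ≤ 1-2*ε₀),
        sq_nonneg (δ*(3*(t:ℝ)+1-2*ε₀) - 3), mul_pos hδ hε₀,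
        mul_nonneg (by linarith : (0:ℝ) ≤ 1-2*ε₀) (by nlinarith : (0:ℝ) ≤ (3*(t:ℝ)+1)*((t:ℝ)-1) + (4*(t:ℝ)+2)*ε₀),
        mul_nonneg (mul_nonneg (by linarith : (0:ℝ) ≤ 1-2*ε₀) (by nlinarith : (0:ℝ) ≤ (3*(t:ℝ)+1)*((t:ℝ)-1) + (4*(t:ℝ)+2)*ε₀)) (sub_nonneg.2 htδ)]
    have h2 : (t : ℝ) * a - (t : ℝ) * b ≥ (t : ℝ) * (ε₀ * δ ^ 2 * K) := by
      rw [hd0R] at hmain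
      have h5 : (t : ℝ) * a - (t : ℝ) * b ≥ (((t : ℝ) + 1) * δ - 1) * K - b := by
        nlinarith [hmain, hmK]
      have hpolyK : 0 ≤ (2 * (t : ℝ) * ((t : ℝ) + 1) * δ - 2 * (t : ℝ) - 1
          - 2 * (t : ℝ) ^ 2 * ε₀ * δ ^ 2) * K := mul_nonneg hpoly hK0
      have h5' : (((t : ℝ) + 1) * δ - 1) * K - b ≤ (t : ℝ) * a - (t : ℝ) * b := h5
      have h7 := mul_le_mul_of_nonneg_left h5' (by linarith : (0:ℝ) ≤ 2 * (t : ℝ))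
      have h8 : 2 * (t : ℝ) * ((t : ℝ) * (ε₀ * δ ^ 2 * K))
          ≤ 2 * (t : ℝ) * ((t : ℝ) * a - (t : ℝ) * b) := by
        ring_nf at h7 hbK hpolyK ⊢
        linarith [h7, hbK, hpolyK]
      exact le_of_mul_le_mul_left h8 (by linarith)
    have h3' := (mul_le_mul_iff_right₀ hT0).1 (by linarith : (t : ℝ) * (ε₀ * δ ^ 2 * K) ≤ (t : ℝ) * (a - b))
    calc ε₀ * δ ^ 2 * c * F.card = ε₀ * δ ^ 2 * K := by rw [hKK]; ring
      _ ≤ a - b := h3'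
end

section
/- Let G be a (c,d,α,δ)-bipartite expander, and let C₀ be a linear code of minimum distance d₀. For a word x with corrupt set F and unsatisfied constraint set U = {u ∈ R : x_{N(u)} ∉ C₀}, the inclusions N_{≤d₀−1}(F) ⊆ U ⊆ N(F) hold. Consequently, if |F| ≤ αn then ((δd₀−1)/(d₀−1))·c|F| ≤ |U| ≤ c|F|. -/
open Finset
open scoped Classical

/-- For a Tanner code `T(G,C₀)` on a `(c,d,α,δ)`-bipartite expander with inner code of
minimum distance `d₀`, the corrupt set `F` and unsatisfied set `U` of a word `x`
satisfy `N_{≤ d₀-1}(F) ⊆ U ⊆ N(F)`; consequently, if `|F| ≤ αn` then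
`((δd₀-1)/(d₀-1))·c|F| ≤ |U| ≤ c|F|`. -/
theorem stmt_8 {L R : Type*} [Fintype L] [Fintype R] [DecidableEq L]
    (c d d₀ n : ℕ) (α δ : ℝ) (hδ : 0 < δ) (hδ1 : δ ≤ 1) (hc : 0 < c)
    (hd₀2 : 2 ≤ d₀) (hd₀d : d₀ ≤ d)
    (hn : Fintype.card L = n)
    (nb : R → Fin d → L) (hinj : ∀ u, Function.Injective (nb u))
    (hleft : ∀ v : L, (univ.filter (fun u : R => ∃ i, nb u i = v)).card = c)
    (hexp : ∀ S : Finset L, (S.card : ℝ) ≤ α * n →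
      δ * c * S.card ≤ ((univ.filter (fun u : R => ∃ i, nb u i ∈ S)).card : ℝ))
    (C₀ : Submodule (ZMod 2) (Fin d → ZMod 2))
    (hdist : ∀ w ∈ C₀, w ≠ 0 → d₀ ≤ hammingNorm w)
    (x y : L → ZMod 2) (hy : ∀ u : R, (fun i => y (nb u i)) ∈ C₀)
    (F : Finset L) (hF : F = univ.filter (fun v => x v ≠ y v))
    (U : Finset R) (hU : U = univ.filter (fun u : R => (fun i => x (nb u i)) ∉ C₀)) :
    (univ.filter (fun u : R =>
        1 ≤ (univ.filter (fun i : Fin d => nb u i ∈ F)).card ∧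
          (univ.filter (fun i : Fin d => nb u i ∈ F)).card ≤ d₀ - 1)) ⊆ U ∧
      U ⊆ univ.filter (fun u : R => ∃ i, nb u i ∈ F) ∧
      ((F.card : ℝ) ≤ α * n →
        (δ * d₀ - 1) / ((d₀ : ℝ) - 1) * c * F.card ≤ (U.card : ℝ) ∧
          (U.card : ℝ) ≤ c * F.card) := by
  classical
  have hFm : ∀ v, v ∈ F ↔ x v ≠ y v := by simp [hF]
  have hUm : ∀ u, u ∈ U ↔ (fun i => x (nb u i)) ∉ C₀ := by simp [hU]
  set k : R → ℕ := fun u => (univ.filter (fun i : Fin d => nb u i ∈ F)).card with hk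
  set N : Finset R := univ.filter (fun u : R => ∃ i, nb u i ∈ F) with hN
  set A : Finset R := univ.filter (fun u : R =>
      1 ≤ (univ.filter (fun i : Fin d => nb u i ∈ F)).card ∧
        (univ.filter (fun i : Fin d => nb u i ∈ F)).card ≤ d₀ - 1) with hA
  -- A ⊆ U
  have hAU : A ⊆ U := by
    intro u hu
    rw [hA, mem_filter] at hu
    obtain ⟨-, h1, h2⟩ := hu
    rw [hUm]
    intro hxC
    set w : Fin d → ZMod 2 := (fun i => x (nb u i)) - (fun i => y (nb u i)) with hw
    have hwC : w ∈ C₀ := Submodule.sub_mem C₀ hxC (hy u)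
    have hwn : hammingNorm w = (univ.filter (fun i : Fin d => nb u i ∈ F)).card := by
      unfold hammingNorm
      congr 1
      ext i
      simp only [mem_filter, mem_univ, true_and, hw, Pi.sub_apply, sub_ne_zero]
      exact (hFm (nb u i)).symm
    have hwne : w ≠ 0 := by
      intro h0
      rw [h0] at hwn
      simp [hammingNorm] at hwn
      omega
    have := hdist w hwC hwne
    omega
  -- U ⊆ N
  have hUN : U ⊆ N := by
    intro u hu
    rw [hUm] at hu
    rw [hN, mem_filter]
    refine ⟨mem_univ _, ?_⟩
    by_contra h
    push_neg at h
    apply hu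
    have : (fun i => x (nb u i)) = (fun i => y (nb u i)) := by
      funext i
      have := h i
      rw [hFm] at this
      push_neg at this
      exact this
    rw [this]; exact hy u
  -- A ⊆ N
  have hAN : A ⊆ N := by
    intro u hu
    rw [hA, mem_filter] at hu
    obtain ⟨-, h1, -⟩ := hu
    rw [hN, mem_filter]
    refine ⟨mem_univ _, ?_⟩
    obtain ⟨i, hi⟩ := Finset.card_pos.mp h1
    exact ⟨i, (mem_filter.mp hi).2⟩
  -- edge count : ∑ u, k u = c * F.card
  have hsum : ∑ u : R, k u = c * F.card := by
    have step1 : ∀ u : R, k u = ∑ v ∈ F, (univ.filter (fun i : Fin d => nb u i = v)).card := by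
      intro u
      rw [hk]
      simp only
      have hset : (univ.filter (fun i : Fin d => nb u i ∈ F))
          = F.biUnion (fun v => univ.filter (fun i : Fin d => nb u i = v)) := by
        ext i
        simp [Finset.mem_biUnion]
      rw [hset, Finset.card_biUnion]
      intro v₁ _ v₂ _ hne
      simp only [Finset.disjoint_left, mem_filter, mem_univ, true_and]
      intro i hi hj
      exact hne (hi.symm.trans hj)
    have step2 : ∀ (u : R) (v : L), (univ.filter (fun i : Fin d => nb u i = v)).card
        = if (∃ i, nb u i = v) then 1 else 0 := by
      intro u v
      split_ifs with h
      · obtain ⟨i, hi⟩ := h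
        rw [Finset.card_eq_one]
        refine ⟨i, ?_⟩
        ext j
        simp only [mem_filter, mem_univ, true_and, Finset.mem_singleton]
        constructor
        · intro hj; exact hinj u (hj.trans hi.symm)
        · rintro rfl; exact hi
      · rw [Finset.card_eq_zero]
        ext j
        simp only [mem_filter, mem_univ, true_and, Finset.notMem_empty, iff_false]
        exact fun hj => h ⟨j, hj⟩
    calc ∑ u : R, k u = ∑ u : R, ∑ v ∈ F, (univ.filter (fun i : Fin d => nb u i = v)).card :=
          Finset.sum_congr rfl (fun u _ => step1 u)
      _ = ∑ v ∈ F, ∑ u : R, (univ.filter (fun i : Fin d => nb u i = v)).card :=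
          Finset.sum_comm
      _ = ∑ v ∈ F, c := by
          refine Finset.sum_congr rfl (fun v _ => ?_)
          rw [← hleft v, Finset.card_filter]
          exact Finset.sum_congr rfl (fun u _ => step2 u v)
      _ = c * F.card := by rw [Finset.sum_const, smul_eq_mul, mul_comm]
  -- k u = 0 off N, k u ≥ 1 on N, k u ≥ d₀ on N \ A
  have hkN : ∀ u ∈ N, 1 ≤ k u := by
    intro u hu
    rw [hN, mem_filter] at hu
    obtain ⟨-, i, hi⟩ := hu
    rw [hk]
    exact Finset.card_pos.mpr ⟨i, by simp [hi]⟩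
  have hkNA : ∀ u ∈ N \ A, d₀ ≤ k u := by
    intro u hu
    rw [Finset.mem_sdiff] at hu
    obtain ⟨huN, huA⟩ := hu
    have h1 := hkN u huN
    rw [hA, mem_filter] at huA
    simp only [mem_univ, true_and, not_and, not_le] at huA
    have hkr : k u = (univ.filter (fun i : Fin d => nb u i ∈ F)).card := rfl
    rw [hkr] at h1 ⊢
    have := huA h1
    omega
  have hNle : N.card ≤ c * F.card := by
    calc N.card = ∑ _u ∈ N, 1 := by simp
      _ ≤ ∑ u ∈ N, k u := Finset.sum_le_sum hkN
      _ ≤ ∑ u : R, k u := Finset.sum_le_sum_of_subset (Finset.subset_univ N)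
      _ = c * F.card := hsum
  have hkey : A.card + d₀ * (N.card - A.card) ≤ c * F.card := by
    have hsplit : ∑ u ∈ N, k u = ∑ u ∈ A, k u + ∑ u ∈ N \ A, k u := by
      rw [← Finset.sum_union (Finset.disjoint_sdiff), Finset.union_sdiff_of_subset hAN]
    have h1 : A.card ≤ ∑ u ∈ A, k u := by
      calc A.card = ∑ _u ∈ A, 1 := by simp
        _ ≤ ∑ u ∈ A, k u := Finset.sum_le_sum (fun u hu => hkN u (hAN hu))
    have h2 : d₀ * (N.card - A.card) ≤ ∑ u ∈ N \ A, k u := by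
      calc d₀ * (N.card - A.card) = ∑ _u ∈ N \ A, d₀ := by
            rw [Finset.sum_const, smul_eq_mul, Finset.card_sdiff_of_subset hAN, mul_comm]
        _ ≤ ∑ u ∈ N \ A, k u := Finset.sum_le_sum hkNA
    calc A.card + d₀ * (N.card - A.card) ≤ ∑ u ∈ A, k u + ∑ u ∈ N \ A, k u :=
          Nat.add_le_add h1 h2
      _ = ∑ u ∈ N, k u := hsplit.symm
      _ ≤ ∑ u : R, k u := Finset.sum_le_sum_of_subset (Finset.subset_univ N)
      _ = c * F.card := hsum
  refine ⟨hAU, hUN, fun hαn => ?_⟩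
  have hexpF := hexp F hαn
  rw [← hN] at hexpF
  have hcardAN : A.card ≤ N.card := Finset.card_le_card hAN
  -- cast hkey to ℝ
  have hkeyR : (A.card : ℝ) + (d₀ : ℝ) * ((N.card : ℝ) - (A.card : ℝ)) ≤ (c : ℝ) * F.card := by
    have := (Nat.cast_le (α := ℝ)).mpr hkey
    push_cast [Nat.cast_sub hcardAN] at this
    linarith
  have hd₀R : (2 : ℝ) ≤ (d₀ : ℝ) := by exact_mod_cast hd₀2
  have hAU' : (A.card : ℝ) ≤ (U.card : ℝ) := by exact_mod_cast Finset.card_le_card hAU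
  have hUN' : (U.card : ℝ) ≤ (N.card : ℝ) := by exact_mod_cast Finset.card_le_card hUN
  have hNleR : (N.card : ℝ) ≤ (c : ℝ) * F.card := by exact_mod_cast hNle
  constructor
  · have hpos : (0 : ℝ) < (d₀ : ℝ) - 1 := by linarith
    rw [div_mul_eq_mul_div, div_mul_eq_mul_div, div_le_iff₀ hpos]
    nlinarith [hexpF, hkeyR, hAU']
  · linarith
end

section
/- Let G be a (c,d,α,δ)-bipartite expander. If δd₀ > 1, then the Tanner code T(G,C₀), where C₀ is a linear code with minimum distance d₀, has minimum Hamming distance greater than αn. -/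
open Finset
open scoped Classical

/-- If `G` is a `(c,d,α,δ)`-bipartite expander and `δd₀ > 1`, then the Tanner code
`T(G,C₀)` for an inner linear code `C₀` of minimum distance `d₀` has minimum Hamming
distance greater than `αn`: every nonzero codeword has weight `> αn`. -/
theorem stmt_9 {L R : Type*} [Fintype L] [Fintype R] [DecidableEq L]
    (c d d₀ n : ℕ) (α δ : ℝ) (hδ : 0 < δ) (hδ1 : δ ≤ 1) (hc : 0 < c)
    (hd₀d : d₀ ≤ d) (hδd₀ : 1 < δ * d₀)
    (hn : Fintype.card L = n)
    (nb : R → Fin d → L) (hinj : ∀ u, Function.Injective (nb u))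
    (hleft : ∀ v : L, (univ.filter (fun u : R => ∃ i, nb u i = v)).card = c)
    (hexp : ∀ S : Finset L, (S.card : ℝ) ≤ α * n →
      δ * c * S.card ≤ ((univ.filter (fun u : R => ∃ i, nb u i ∈ S)).card : ℝ))
    (C₀ : Submodule (ZMod 2) (Fin d → ZMod 2))
    (hdist : ∀ w ∈ C₀, w ≠ 0 → d₀ ≤ hammingNorm w) :
    ∀ x : L → ZMod 2, (∀ u : R, (fun i => x (nb u i)) ∈ C₀) → x ≠ 0 →
      α * n < ((univ.filter (fun v : L => x v ≠ 0)).card : ℝ) := by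
  intro x hx hx0
  by_contra h
  push_neg at h
  set F : Finset L := univ.filter (fun v : L => x v ≠ 0) with hF
  have hFne : F.Nonempty := by
    rcases Function.ne_iff.mp hx0 with ⟨v, hv⟩
    exact ⟨v, by simp [hF]; exact hv⟩
  set N : Finset R := univ.filter (fun u : R => ∃ i, nb u i ∈ F) with hN
  -- per-constraint lower bound
  have hlocal : ∀ u ∈ N, d₀ ≤ (univ.filter (fun i => nb u i ∈ F)).card := by
    intro u hu
    have hu' : ∃ i, nb u i ∈ F := by simpa [hN] using hu
    have hw : (fun i => x (nb u i)) ≠ 0 := by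
      rcases hu' with ⟨i, hi⟩
      have : x (nb u i) ≠ 0 := by simpa [hF] using hi
      intro h0
      exact this (congrFun h0 i)
    have hd := hdist _ (hx u) hw
    calc d₀ ≤ hammingNorm (fun i => x (nb u i)) := hd
      _ = (univ.filter (fun i => nb u i ∈ F)).card := by
          unfold hammingNorm
          congr 1
          apply filter_congr
          intro i _
          simp [hF]
  have hsum1 : d₀ * N.card ≤ ∑ u ∈ N, (univ.filter (fun i => nb u i ∈ F)).card := by
    calc d₀ * N.card = ∑ _u ∈ N, d₀ := by rw [Finset.sum_const, smul_eq_mul, mul_comm]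
      _ ≤ _ := Finset.sum_le_sum hlocal
  have hsum2 : ∑ u ∈ N, (univ.filter (fun i => nb u i ∈ F)).card = c * F.card := by
    have hstep : ∀ u : R, (univ.filter (fun i => nb u i ∈ F)).card
        = (F.filter (fun v => ∃ i, nb u i = v)).card := by
      intro u
      rw [← Finset.card_image_of_injective _ (hinj u)]
      congr 1
      ext v
      simp only [Finset.mem_image, Finset.mem_filter, Finset.mem_univ, true_and]
      constructor
      · rintro ⟨i, hi, rfl⟩; exact ⟨hi, i, rfl⟩
      · rintro ⟨hv, i, rfl⟩; exact ⟨i, hv, rfl⟩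
    have hext : ∑ u ∈ N, (univ.filter (fun i => nb u i ∈ F)).card
        = ∑ u : R, (univ.filter (fun i => nb u i ∈ F)).card := by
      apply Finset.sum_subset (Finset.subset_univ N)
      intro u _ hu
      have : ¬ ∃ i, nb u i ∈ F := by simpa [hN] using hu
      simp only [Finset.card_eq_zero, Finset.filter_eq_empty_iff]
      intro i _
      exact fun hi => this ⟨i, hi⟩
    rw [hext]
    calc ∑ u : R, (univ.filter (fun i => nb u i ∈ F)).card
        = ∑ u : R, (F.filter (fun v => ∃ i, nb u i = v)).card := by
          exact Finset.sum_congr rfl fun u _ => hstep u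
      _ = ∑ u : R, ∑ v ∈ F, (if ∃ i, nb u i = v then 1 else 0) := by
          refine Finset.sum_congr rfl fun u _ => ?_
          rw [Finset.card_filter]
      _ = ∑ v ∈ F, ∑ u : R, (if ∃ i, nb u i = v then 1 else 0) := Finset.sum_comm
      _ = ∑ v ∈ F, (univ.filter (fun u : R => ∃ i, nb u i = v)).card := by
          refine Finset.sum_congr rfl fun v _ => ?_
          rw [Finset.card_filter]
      _ = ∑ v ∈ F, c := Finset.sum_congr rfl fun v _ => hleft v
      _ = c * F.card := by rw [Finset.sum_const, smul_eq_mul, mul_comm]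
  have hkey : d₀ * N.card ≤ c * F.card := hsum2 ▸ hsum1
  have hexpF : δ * c * F.card ≤ (N.card : ℝ) := hexp F h
  have hkeyR : (d₀ : ℝ) * N.card ≤ (c : ℝ) * F.card := by exact_mod_cast hkey
  have hFpos : (0 : ℝ) < F.card := by exact_mod_cast hFne.card_pos
  have hcpos : (0 : ℝ) < c := by exact_mod_cast hc
  have hd₀nn : (0:ℝ) ≤ (d₀:ℝ) := Nat.cast_nonneg _
  have h1 : (d₀:ℝ) * (δ * c * F.card) ≤ (d₀:ℝ) * N.card :=
    mul_le_mul_of_nonneg_left hexpF hd₀nn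
  have h2 : 1 * ((c:ℝ) * F.card) < (δ * d₀) * ((c:ℝ) * F.card) :=
    mul_lt_mul_of_pos_right hδd₀ (mul_pos hcpos hFpos)
  nlinarith [h1, h2, hkeyR]
end

section
/- Let G₁ be a (c−1,d,α,3/4)-bipartite expander on left set L₁ of size n−d₀ with c ≥ 3 and d₀ ≥ 2, and let G extend G₁ by: adding d₀ new left vertices L₂, adding c new constraints each adjacent to all of L₂ (plus some vertices of L₁), and adding further constraints adjacent only to L₁, in such a way that G is (c,d)-regular. Then G is a (c,d,0.9α,1/d₀)-bipartite expander, provided n ≥ 10d₀. -/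
open Finset
open scoped Classical

/-- Expansion of the extended graph in Proposition 1.2: if the restriction of `G` to
`L₁, R₁` is a `(c-1,d,α,3/4)`-bipartite expander on `|L₁| = n - d₀` left vertices,
every constraint of `R₂` (with `|R₂| = c`) is adjacent to all of `L₂` (with `|L₂| = d₀`),
the constraints of `R₁` and `R₃` are adjacent only to `L₁`, and `G` is `(c,d)`-regular
with `c ≥ 3`, `d₀ ≥ 2`, `n ≥ 10d₀`, then `G` is a `(c,d,0.9α,1/d₀)`-bipartite expander. -/
theorem stmt_13 {L₁ L₂ R₁ R₂ R₃ : Type*}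
    [Fintype L₁] [Fintype L₂] [Fintype R₁] [Fintype R₂] [Fintype R₃]
    [DecidableEq L₁] [DecidableEq L₂]
    (Adj : (L₁ ⊕ L₂) → (R₁ ⊕ R₂ ⊕ R₃) → Prop)
    (c d d₀ n : ℕ) (α : ℝ)
    (hc : 3 ≤ c) (hd₀ : 2 ≤ d₀) (hn : 10 * d₀ ≤ n) (hα : 0 < α)
    (hL₁ : Fintype.card L₁ = n - d₀) (hL₂ : Fintype.card L₂ = d₀)
    (hR₂card : Fintype.card R₂ = c)
    (hexp₁ : ∀ S : Finset L₁, (S.card : ℝ) ≤ α * ((n : ℝ) - d₀) →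
      3 / 4 * ((c : ℝ) - 1) * S.card ≤
        ((univ.filter (fun u : R₁ => ∃ v ∈ S, Adj (Sum.inl v) (Sum.inl u))).card : ℝ))
    (hR₁L : ∀ (u : R₁) (v : L₂), ¬ Adj (Sum.inr v) (Sum.inl u))
    (hR₂L : ∀ (u : R₂) (v : L₂), Adj (Sum.inr v) (Sum.inr (Sum.inl u)))
    (hR₃L : ∀ (u : R₃) (v : L₂), ¬ Adj (Sum.inr v) (Sum.inr (Sum.inr u)))
    (hleft : ∀ v : L₁ ⊕ L₂, (univ.filter (fun u : R₁ ⊕ R₂ ⊕ R₃ => Adj v u)).card = c)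
    (hright : ∀ u : R₁ ⊕ R₂ ⊕ R₃, (univ.filter (fun v : L₁ ⊕ L₂ => Adj v u)).card = d) :
    ∀ S : Finset (L₁ ⊕ L₂), (S.card : ℝ) ≤ 0.9 * α * n →
      (1 / (d₀ : ℝ)) * c * S.card ≤
        ((univ.filter (fun u : R₁ ⊕ R₂ ⊕ R₃ => ∃ v ∈ S, Adj v u)).card : ℝ) := by
  intro S hS
  have hd₀R : (2:ℝ) ≤ d₀ := by exact_mod_cast hd₀
  have hcR : (3:ℝ) ≤ c := by exact_mod_cast hc
  set S₁ := S.toLeft with hS₁def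
  set S₂ := S.toRight with hS₂def
  set T := univ.filter (fun u : R₁ ⊕ R₂ ⊕ R₃ => ∃ v ∈ S, Adj v u) with hTdef
  set N₁ := univ.filter (fun u : R₁ => ∃ v ∈ S₁, Adj (Sum.inl v) (Sum.inl u)) with hN₁def
  -- card split
  have hcardS : S₁.card + S₂.card = S.card := Finset.card_toLeft_add_card_toRight (u := S)
  -- S₁ is small
  have hS1small : (S₁.card : ℝ) ≤ α * ((n : ℝ) - d₀) := by
    have h1 : (S₁.card : ℝ) ≤ S.card := by
      exact_mod_cast (Nat.le.intro hcardS : S₁.card ≤ S.card)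
    have h2 : (0.9 : ℝ) * α * n ≤ α * ((n:ℝ) - d₀) := by
      have hnR : (10:ℝ) * d₀ ≤ n := by exact_mod_cast hn
      nlinarith [hα.le]
    linarith
  have hA := hexp₁ S₁ hS1small
  -- key ratio: (1/d₀)*c ≤ 3/4*(c-1)
  have hratio : (1 / (d₀:ℝ)) * c ≤ 3 / 4 * ((c:ℝ) - 1) := by
    have h1 : (1 / (d₀:ℝ)) * c ≤ (1/2) * c := by
      apply mul_le_mul_of_nonneg_right _ (by positivity)
      rw [div_le_div_iff₀ (by linarith) (by norm_num)]
      linarith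
    nlinarith
  -- N₁ image inside T
  have hsub₁ : N₁.image Sum.inl ⊆ T := by
    intro x hx
    simp only [mem_image] at hx
    obtain ⟨u, hu, rfl⟩ := hx
    simp only [hN₁def, mem_filter, mem_univ, true_and] at hu
    obtain ⟨v, hv, hadj⟩ := hu
    simp only [hTdef, mem_filter, mem_univ, true_and]
    exact ⟨Sum.inl v, (Finset.mem_toLeft).mp hv, hadj⟩
  have hN₁T : (N₁.card : ℝ) ≤ T.card := by
    have := Finset.card_le_card hsub₁
    rw [Finset.card_image_of_injective _ Sum.inl_injective] at this
    exact_mod_cast this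
  rcases S₂.eq_empty_or_nonempty with h2e | h2ne
  · -- S₂ empty
    have : S.card = S₁.card := by rw [← hcardS, h2e]; simp
    rw [this]
    push_cast
    calc (1 / (d₀:ℝ)) * c * S₁.card ≤ 3 / 4 * ((c:ℝ) - 1) * S₁.card := by
          apply mul_le_mul_of_nonneg_right hratio (by positivity)
      _ ≤ (N₁.card : ℝ) := hA
      _ ≤ _ := hN₁T
  · -- S₂ nonempty
    obtain ⟨v₀, hv₀⟩ := h2ne
    have hv₀S : Sum.inr v₀ ∈ S := (Finset.mem_toRight).mp hv₀
    set M := (univ : Finset R₂).image (fun u : R₂ => (Sum.inr (Sum.inl u) : R₁ ⊕ R₂ ⊕ R₃)) with hMdef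
    have hsub₂ : M ⊆ T := by
      intro x hx
      simp only [hMdef, mem_image, mem_univ, true_and] at hx
      obtain ⟨u, rfl⟩ := hx
      simp only [hTdef, mem_filter, mem_univ, true_and]
      exact ⟨Sum.inr v₀, hv₀S, hR₂L u v₀⟩
    have hdisj : Disjoint (N₁.image Sum.inl) M := by
      rw [Finset.disjoint_left]
      intro x hx hxM
      simp only [mem_image] at hx
      simp only [hMdef, mem_image, mem_univ, true_and] at hxM
      obtain ⟨u, _, rfl⟩ := hx
      obtain ⟨u', h⟩ := hxM
      cases h
    have hMcard : M.card = c := by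
      rw [hMdef, Finset.card_image_of_injective _ (fun a b h => by
        injection h with h'; injection h'), Finset.card_univ, hR₂card]
    have hunion : N₁.card + c ≤ T.card := by
      have := Finset.card_le_card (Finset.union_subset hsub₁ hsub₂)
      rwa [Finset.card_union_of_disjoint hdisj,
        Finset.card_image_of_injective _ Sum.inl_injective, hMcard] at this
    have hS₂le : (S₂.card : ℝ) ≤ d₀ := by
      have : S₂.card ≤ Fintype.card L₂ := Finset.card_le_univ _
      rw [hL₂] at this
      exact_mod_cast this
    have hB : (1 / (d₀:ℝ)) * c * S₂.card ≤ c := by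
      rw [one_div, mul_comm (d₀:ℝ)⁻¹ (c:ℝ), mul_assoc]
      have : (d₀:ℝ)⁻¹ * S₂.card ≤ 1 := by
        rw [inv_mul_le_iff₀ (by linarith), mul_one]
        exact hS₂le
      nlinarith [this, (by linarith : (0:ℝ) ≤ (c:ℝ))]
    have hcardSR : (S.card : ℝ) = S₁.card + S₂.card := by exact_mod_cast hcardS.symm
    have hAfull : (1 / (d₀:ℝ)) * c * S₁.card ≤ (N₁.card : ℝ) := by
      calc (1 / (d₀:ℝ)) * c * S₁.card ≤ 3 / 4 * ((c:ℝ) - 1) * S₁.card := by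
            apply mul_le_mul_of_nonneg_right hratio (by positivity)
        _ ≤ _ := hA
    have hTge : (N₁.card : ℝ) + c ≤ T.card := by exact_mod_cast hunion
    rw [hcardSR, mul_add]
    linarith
end

section
/- Let G be a (c,d,α,δ)-bipartite expander, C₀ a linear code of minimum distance d₀ with δd₀ > 1, and let γ > 0. If a corrupted word x with corrupt set F satisfies |F| ≤ αn and its unsatisfied constraint set U satisfies |U| ≤ (δ − 1/d₀)·c·γn, then |F| ≤ γn. -/
open Finset
open scoped Classical


/-- Claim 4.4: for a Tanner code on a `(c,d,α,δ)`-bipartite expander with `δd₀ > 1`,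
if the corrupt set `F` of `x` satisfies `|F| ≤ αn` and the unsatisfied set `U`
satisfies `|U| ≤ (δ - 1/d₀)·c·γn`, then `|F| ≤ γn`. -/
theorem stmt_16 {L R : Type*} [Fintype L] [Fintype R] [DecidableEq L]
    (c d d₀ n : ℕ) (α δ γ : ℝ) (hδ : 0 < δ) (hδ1 : δ ≤ 1) (hc : 0 < c)
    (hd₀d : d₀ ≤ d) (hδd₀ : 1 < δ * d₀) (hγ : 0 < γ)
    (hn : Fintype.card L = n)
    (nb : R → Fin d → L) (hinj : ∀ u, Function.Injective (nb u))
    (hleft : ∀ v : L, (univ.filter (fun u : R => ∃ i, nb u i = v)).card = c)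
    (hexp : ∀ S : Finset L, (S.card : ℝ) ≤ α * n →
      δ * c * S.card ≤ ((univ.filter (fun u : R => ∃ i, nb u i ∈ S)).card : ℝ))
    (C₀ : Submodule (ZMod 2) (Fin d → ZMod 2))
    (hdist : ∀ w ∈ C₀, w ≠ 0 → d₀ ≤ hammingNorm w)
    (x y : L → ZMod 2) (hy : ∀ u : R, (fun i => y (nb u i)) ∈ C₀)
    (F : Finset L) (hF : F = univ.filter (fun v => x v ≠ y v))
    (U : Finset R) (hU : U = univ.filter (fun u : R => (fun i => x (nb u i)) ∉ C₀))
    (hFα : (F.card : ℝ) ≤ α * n)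
    (hUsmall : (U.card : ℝ) ≤ (δ - 1 / d₀) * c * (γ * n)) :
    (F.card : ℝ) ≤ γ * n := by
  classical
  have hd₀pos : 0 < d₀ := by
    rcases Nat.eq_zero_or_pos d₀ with h | h
    · exfalso; rw [h] at hδd₀; simp at hδd₀; linarith
    · exact h
  have hFmem : ∀ v, v ∈ F ↔ x v ≠ y v := by
    intro v; rw [hF]; simp
  have hsingle : ∀ (u : R) (v : L), (univ.filter (fun i : Fin d => nb u i = v)).card
      = if ∃ i, nb u i = v then 1 else 0 := by
    intro u v
    by_cases h : ∃ i, nb u i = v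
    · obtain ⟨i, hi⟩ := h
      rw [if_pos ⟨i, hi⟩]
      have : (univ.filter (fun j : Fin d => nb u j = v)) = {i} := by
        ext j
        simp only [mem_filter, mem_univ, true_and, mem_singleton]
        constructor
        · intro hj; exact hinj u (hj.trans hi.symm)
        · rintro rfl; exact hi
      rw [this, card_singleton]
    · rw [if_neg h, card_eq_zero, filter_eq_empty_iff]
      intro j _ hj; exact h ⟨j, hj⟩
  -- double counting: total edges from F
  have hcount : ∑ u : R, (univ.filter (fun i : Fin d => nb u i ∈ F)).card = c * F.card := by
    calc ∑ u : R, (univ.filter (fun i : Fin d => nb u i ∈ F)).card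
        = ∑ u : R, ∑ v ∈ F, (univ.filter (fun i : Fin d => nb u i = v)).card := by
          refine Finset.sum_congr rfl fun u _ => ?_
          calc (univ.filter (fun i : Fin d => nb u i ∈ F)).card
              = ∑ i : Fin d, if nb u i ∈ F then 1 else 0 := by rw [card_filter]
            _ = ∑ i : Fin d, ∑ v ∈ F, if nb u i = v then 1 else 0 := by
                refine Finset.sum_congr rfl fun i _ => ?_
                exact (Finset.sum_ite_eq F (nb u i) (fun _ => 1)).symm
            _ = ∑ v ∈ F, ∑ i : Fin d, if nb u i = v then 1 else 0 := Finset.sum_comm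
            _ = ∑ v ∈ F, (univ.filter (fun i : Fin d => nb u i = v)).card := by
                refine Finset.sum_congr rfl fun v _ => ?_
                rw [card_filter]
      _ = ∑ v ∈ F, ∑ u : R, (univ.filter (fun i : Fin d => nb u i = v)).card :=
          Finset.sum_comm
      _ = ∑ v ∈ F, c := by
          refine Finset.sum_congr rfl fun v _ => ?_
          calc ∑ u : R, (univ.filter (fun i : Fin d => nb u i = v)).card
              = ∑ u : R, if ∃ i, nb u i = v then 1 else 0 := by
                exact Finset.sum_congr rfl fun u _ => hsingle u v
            _ = (univ.filter (fun u : R => ∃ i, nb u i = v)).card := by rw [card_filter]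
            _ = c := hleft v
      _ = c * F.card := by rw [Finset.sum_const, smul_eq_mul, mul_comm]
  -- the neighbor set of F
  set NF := univ.filter (fun u : R => ∃ i, nb u i ∈ F) with hNF
  -- each satisfied neighbor has ≥ d₀ neighbors in F
  have hB : ∀ u ∈ NF \ U, d₀ ≤ (univ.filter (fun i : Fin d => nb u i ∈ F)).card := by
    intro u hu
    rw [mem_sdiff, hNF, mem_filter] at hu
    obtain ⟨⟨-, i0, hi0⟩, huU⟩ := hu
    have hxC : (fun i => x (nb u i)) ∈ C₀ := by
      by_contra h
      exact huU (by rw [hU]; simp [h])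
    set w : Fin d → ZMod 2 := fun i => x (nb u i) - y (nb u i) with hw
    have hwC : w ∈ C₀ := Submodule.sub_mem _ hxC (hy u)
    have hwne : w ≠ 0 := by
      intro h
      have := congrFun h i0
      rw [hw] at this
      simp only [Pi.zero_apply, sub_eq_zero] at this
      exact (hFmem _).1 hi0 this
    have hd : d₀ ≤ hammingNorm w := hdist w hwC hwne
    refine le_trans hd ?_
    unfold hammingNorm
    apply Finset.card_le_card
    intro i hi
    simp only [mem_filter, mem_univ, true_and] at hi ⊢
    rw [hFmem]
    intro heq
    exact hi (by rw [hw]; simp [heq])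
  -- lower bound on the edge count from the satisfied neighbors
  have hedge : d₀ * (NF \ U).card ≤ c * F.card := by
    rw [← hcount]
    calc d₀ * (NF \ U).card = ∑ _u ∈ NF \ U, d₀ := by rw [Finset.sum_const, smul_eq_mul, mul_comm]
      _ ≤ ∑ u ∈ NF \ U, (univ.filter (fun i : Fin d => nb u i ∈ F)).card :=
          Finset.sum_le_sum hB
      _ ≤ ∑ u : R, (univ.filter (fun i : Fin d => nb u i ∈ F)).card :=
          Finset.sum_le_sum_of_subset (Finset.subset_univ _)
  -- NF.card ≤ (NF\U).card + U.card
  have hsplit : NF.card ≤ (NF \ U).card + U.card := by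
    calc NF.card ≤ ((NF \ U) ∪ U).card :=
          Finset.card_le_card (fun u hu => by
            by_cases h : u ∈ U
            · exact Finset.mem_union_right _ h
            · exact Finset.mem_union_left _ (Finset.mem_sdiff.2 ⟨hu, h⟩))
      _ ≤ (NF \ U).card + U.card := Finset.card_union_le _ _
  -- expander bound
  have hexpF : δ * c * F.card ≤ (NF.card : ℝ) := hexp F hFα
  -- pass to reals
  have hedgeR : (d₀ : ℝ) * (NF \ U).card ≤ c * F.card := by
    exact_mod_cast hedge
  have hsplitR : (NF.card : ℝ) ≤ (NF \ U).card + U.card := by exact_mod_cast hsplit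
  have hd₀R : (0 : ℝ) < d₀ := by exact_mod_cast hd₀pos
  have hcR : (0 : ℝ) < c := by exact_mod_cast hc
  -- combine: (δ - 1/d₀) * c * |F| ≤ |U|
  have hkey : (δ - 1 / d₀) * c * F.card ≤ (U.card : ℝ) := by
    have h1 : ((NF \ U).card : ℝ) ≤ c * F.card / d₀ := by
      rw [le_div_iff₀ hd₀R]; linarith
    have : δ * c * F.card ≤ c * F.card / d₀ + U.card := by linarith
    have h2 : (δ - 1 / d₀) * c * F.card
        = δ * c * F.card - c * F.card / d₀ := by ring
    linarith
  have hpos : (0 : ℝ) < (δ - 1 / d₀) * c := by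
    have : 1 / (d₀ : ℝ) < δ := by
      rw [div_lt_iff₀ hd₀R]; linarith
    have : 0 < δ - 1 / d₀ := by linarith
    positivity
  have := le_trans hkey hUsmall
  exact le_of_mul_le_mul_left (by linarith [this]) hpos
end
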